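/- Let C be a subgroup of groups A and B, let G = A ∗_C B be the amalgamated free product, and let f : G → Q be a group homomorphism whose restriction to C is injective. If the kernels of f restricted to A and to B are free groups, then the kernel of f is a free group. -/

import Mathlib

universe u

/-- The two-element family of groups `A` (at `true`) and `B` (at `false`). -/
abbrev Fam (A B : Type u) : Bool → Type u := fun b => bif b then A else B

instance famGroup (A B : Type u) [Group A] [Group B] : ∀ b, Group (Fam A B b) :=
  fun b => match b with
  | true => inferInstanceAs (Group A)
  | false => inferInstanceAs (Group B)

/-- The family of inclusions of `C` into `A` and `B`; the amalgamated free product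
`A ∗_C B` is then `Monoid.PushoutI (famHom ι₁ ι₂)`, with canonical injections
`Monoid.PushoutI.of true : A →* A ∗_C B` and `Monoid.PushoutI.of false : B →* A ∗_C B`
and common map `Monoid.PushoutI.base : C →* A ∗_C B`. -/
def famHom {A B C : Type u} [Group A] [Group B] [Group C] (ι₁ : C →* A) (ι₂ : C →* B) :
    ∀ b, C →* Fam A B b := fun b => match b with
  | true => ι₁
  | false => ι₂


universe v

open Monoid CategoryTheory Function
open scoped Classical

noncomputable section AmalgFreeSection

namespace AmalgFree

variable {ι : Type v} {H : ι → Type u} {C : Type u} {Q : Type u}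
  [∀ i, Group (H i)] [Group C] [Group Q] {φ : ∀ i, C →* H i}
  (f : Monoid.PushoutI φ →* Q)

/-- The coset space on which everything acts. -/
abbrev Xq := Monoid.PushoutI φ ⧸ f.ker

lemma smul_fixed_iff (g : Monoid.PushoutI φ) (x : Xq f) : g • x = x ↔ f g = 1 := by
  induction x using QuotientGroup.induction_on with
  | H h =>
    show ((g * h : Monoid.PushoutI φ) : Xq f) = (h : Monoid.PushoutI φ ⧸ f.ker) ↔ _
    rw [QuotientGroup.eq]
    simp only [MonoidHom.mem_ker, map_mul, map_inv, mul_inv_rev]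
    constructor
    · intro hh
      have := congrArg (fun z => f h * z * (f h)⁻¹) hh
      simpa [mul_assoc] using this
    · intro hh; simp [hh, mul_assoc]

/-- Orbit equivalence for the `C`-action via `base`. -/
def relC : Setoid (Xq f) where
  r x y := ∃ c : C, Monoid.PushoutI.base φ c • x = y
  iseqv := by
    refine ⟨fun x => ⟨1, by simp⟩, ?_, ?_⟩
    · rintro x y ⟨c, rfl⟩
      exact ⟨c⁻¹, by simp [map_inv, inv_smul_smul]⟩
    · rintro x y z ⟨c, rfl⟩ ⟨c', rfl⟩
      exact ⟨c' * c, by simp [map_mul, mul_smul]⟩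

lemma relC_r {x y : Xq f} : (relC f).r x y ↔ ∃ c : C, Monoid.PushoutI.base φ c • x = y :=
  Iff.rfl

def repC (x : Xq f) : Xq f := Quotient.out (Quotient.mk (relC f) x)

lemma relC_repC (x : Xq f) : (relC f).r (repC f x) x :=
  Quotient.exact (Quotient.out_eq (Quotient.mk (relC f) x))

lemma repC_eq_of_rel {x y : Xq f} (h : (relC f).r x y) : repC f x = repC f y := by
  unfold repC; rw [Quotient.sound h]

def tC (x : Xq f) : C := Classical.choose (relC_repC f x)

lemma tC_spec (x : Xq f) : Monoid.PushoutI.base φ (tC f x) • repC f x = x :=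
  Classical.choose_spec (relC_repC f x)

lemma repC_idem (x : Xq f) : repC f (repC f x) = repC f x :=
  repC_eq_of_rel f (relC_repC f x)

lemma repC_smul (c : C) (x : Xq f) : repC f (Monoid.PushoutI.base φ c • x) = repC f x :=
  (repC_eq_of_rel f ((relC_r f).2 ⟨c, rfl⟩)).symm

lemma baseC_smul_inj (hC : Function.Injective (f.comp (Monoid.PushoutI.base φ)))
    {c c' : C} {x : Xq f}
    (h : Monoid.PushoutI.base φ c • x = Monoid.PushoutI.base φ c' • x) : c = c' := by
  have h2 : Monoid.PushoutI.base φ (c'⁻¹ * c) • x = x := by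
    rw [map_mul, mul_smul, h, map_inv, inv_smul_smul]
  rw [smul_fixed_iff] at h2
  have : (f.comp (Monoid.PushoutI.base φ)) (c'⁻¹ * c) = (f.comp (Monoid.PushoutI.base φ)) 1 := by
    simpa using h2
  have := hC this
  rwa [inv_mul_eq_one, eq_comm] at this

lemma tC_unique (hC : Function.Injective (f.comp (Monoid.PushoutI.base φ))) {c : C} {x : Xq f}
    (h : Monoid.PushoutI.base φ c • repC f x = x) : c = tC f x :=
  baseC_smul_inj f hC (h.trans (tC_spec f x).symm)

lemma tC_smul (hC : Function.Injective (f.comp (Monoid.PushoutI.base φ))) (c : C) (x : Xq f) :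
    tC f (Monoid.PushoutI.base φ c • x) = c * tC f x := by
  refine (tC_unique f hC ?_).symm
  rw [repC_smul, map_mul, mul_smul, tC_spec]

lemma tC_of_fixed (hC : Function.Injective (f.comp (Monoid.PushoutI.base φ))) {x : Xq f}
    (h : repC f x = x) : tC f x = 1 := by
  have : (1 : C) = tC f x := tC_unique f hC (by rw [map_one, one_smul, h])
  exact this.symm

/-- Orbit equivalence for the `i`-th factor action via `of i`. -/
def relI (i : ι) : Setoid (Xq f) where
  r x y := ∃ a : H i, Monoid.PushoutI.of (φ := φ) i a • x = y
  iseqv := by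
    refine ⟨fun x => ⟨1, by simp⟩, ?_, ?_⟩
    · rintro x y ⟨a, rfl⟩
      exact ⟨a⁻¹, by simp [map_inv, inv_smul_smul]⟩
    · rintro x y z ⟨a, rfl⟩ ⟨a', rfl⟩
      exact ⟨a' * a, by simp [map_mul, mul_smul]⟩

lemma relI_r {i : ι} {x y : Xq f} :
    (relI f i).r x y ↔ ∃ a : H i, Monoid.PushoutI.of (φ := φ) i a • x = y := Iff.rfl

/-- The chosen basepoint of the `i`-orbit of `x`; it is a `repC`-fixed point. -/
def bp (i : ι) (x : Xq f) : Xq f :=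
  repC f (Quotient.out (Quotient.mk (relI f i) x))

lemma relI_of_relC {i : ι} {x y : Xq f} (h : (relC f).r x y) : (relI f i).r x y := by
  obtain ⟨c, rfl⟩ := (relC_r f).1 h
  exact (relI_r f).2 ⟨φ i c, by rw [Monoid.PushoutI.of_apply_eq_base φ]⟩

lemma relI_bp (i : ι) (x : Xq f) : (relI f i).r (bp f i x) x := by
  refine (relI f i).trans ?_ (Quotient.exact (Quotient.out_eq (Quotient.mk (relI f i) x)))
  exact relI_of_relC f (relC_repC f _)

lemma bp_eq_of_rel {i : ι} {x y : Xq f} (h : (relI f i).r x y) : bp f i x = bp f i y := by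
  unfold bp; rw [Quotient.sound h]

lemma bp_smul (i : ι) (a : H i) (x : Xq f) : bp f i (Monoid.PushoutI.of (φ := φ) i a • x) = bp f i x :=
  (bp_eq_of_rel f ((relI_r f).2 ⟨a, rfl⟩)).symm

lemma bp_smulC (i : ι) (c : C) (x : Xq f) : bp f i (Monoid.PushoutI.base φ c • x) = bp f i x := by
  rw [← Monoid.PushoutI.of_apply_eq_base φ i c, bp_smul]

lemma repC_bp (i : ι) (x : Xq f) : repC f (bp f i x) = bp f i x :=
  repC_idem f _

lemma bp_idem (i : ι) (x : Xq f) : bp f i (bp f i x) = bp f i x :=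
  bp_eq_of_rel f (relI_bp f i x)

lemma bp_repC (i : ι) (x : Xq f) : bp f i (repC f x) = bp f i x :=
  bp_eq_of_rel f (relI_of_relC f (relC_repC f x))

/-- Transversal element for `repC`-fixed points, trivial at basepoints. -/
def t' (i : ι) (y : Xq f) : H i :=
  if y = bp f i y then 1 else Classical.choose ((relI_r f).1 (relI_bp f i y))

lemma t'_spec (i : ι) (y : Xq f) : Monoid.PushoutI.of (φ := φ) i (t' f i y) • bp f i y = y := by
  unfold t'
  split
  · next h => rw [map_one, one_smul, ← h]
  · exact Classical.choose_spec ((relI_r f).1 (relI_bp f i y))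

lemma t'_bp {i : ι} {y : Xq f} (h : y = bp f i y) : t' f i y = 1 := by unfold t'; rw [if_pos h]

/-- The full transversal element: `of i (tI f i x) • bp f i x = x`, compatible with the
`C`-transversal. -/
def tI (i : ι) (x : Xq f) : H i := φ i (tC f x) * t' f i (repC f x)

lemma tI_spec (i : ι) (x : Xq f) : Monoid.PushoutI.of (φ := φ) i (tI f i x) • bp f i x = x := by
  unfold tI
  rw [map_mul, mul_smul, Monoid.PushoutI.of_apply_eq_base φ]
  have h1 : Monoid.PushoutI.of (φ := φ) i (t' f i (repC f x)) • bp f i x = repC f x := by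
    have := t'_spec f i (repC f x)
    rwa [bp_repC] at this
  rw [h1, tC_spec]

lemma tI_inv_smul (i : ι) (x : Xq f) :
    (Monoid.PushoutI.of (φ := φ) i (tI f i x))⁻¹ • x = bp f i x := by
  rw [inv_smul_eq_iff, tI_spec]

lemma tI_smulC (hC : Function.Injective (f.comp (Monoid.PushoutI.base φ))) (i : ι) (c : C)
    (x : Xq f) : tI f i (Monoid.PushoutI.base φ c • x) = φ i c * tI f i x := by
  unfold tI
  rw [tC_smul f hC, repC_smul, map_mul, mul_assoc]

lemma tI_of_repC_fixed (hC : Function.Injective (f.comp (Monoid.PushoutI.base φ)))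
    {i : ι} {x : Xq f} (h : repC f x = x) : tI f i x = t' f i x := by
  unfold tI
  rw [tC_of_fixed f hC h, map_one, one_mul, h]

lemma tI_bp (hC : Function.Injective (f.comp (Monoid.PushoutI.base φ))) (i : ι) (x : Xq f) :
    tI f i (bp f i x) = 1 := by
  rw [tI_of_repC_fixed f hC (repC_bp f i x), t'_bp f (bp_idem f i x).symm]

lemma kerI_smul {i : ι} (k : (f.comp (Monoid.PushoutI.of (φ := φ) i)).ker) (x : Xq f) :
    Monoid.PushoutI.of (φ := φ) i (k : H i) • x = x :=
  (smul_fixed_iff f _ x).2 k.2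

/-- The stabilizer-valued "Schreier cocycle" of the `i`-th factor. -/
def lamI (i : ι) (a : H i) (b : Xq f) : (f.comp (Monoid.PushoutI.of (φ := φ) i)).ker :=
  ⟨(tI f i b)⁻¹ * a * tI f i (Monoid.PushoutI.of (φ := φ) i a⁻¹ • b), by
    have hx : Monoid.PushoutI.of (φ := φ) i a • (Monoid.PushoutI.of (φ := φ) i a⁻¹ • b) = b := by
      rw [map_inv, smul_inv_smul]
    have hb : bp f i (Monoid.PushoutI.of (φ := φ) i a⁻¹ • b) = bp f i b := bp_smul f i _ b
    have : Monoid.PushoutI.of (φ := φ) i ((tI f i b)⁻¹ * a * tI f i (Monoid.PushoutI.of (φ := φ) i a⁻¹ • b))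
        • bp f i b = bp f i b := by
      rw [map_mul, map_mul, mul_smul, mul_smul, ← hb, tI_spec, hb, hx, map_inv, inv_smul_eq_iff,
        tI_spec]
    exact (smul_fixed_iff f _ (bp f i b)).1 this⟩

lemma lamI_coe (i : ι) (a : H i) (b : Xq f) :
    (lamI f i a b : H i) = (tI f i b)⁻¹ * a * tI f i (Monoid.PushoutI.of (φ := φ) i a⁻¹ • b) := rfl

lemma lamI_mul (i : ι) (a b : H i) (z : Xq f) :
    lamI f i (a * b) z = lamI f i a z * lamI f i b (Monoid.PushoutI.of (φ := φ) i a⁻¹ • z) := by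
  have hz : Monoid.PushoutI.of (φ := φ) i (a * b)⁻¹ • z
      = Monoid.PushoutI.of (φ := φ) i b⁻¹ • (Monoid.PushoutI.of (φ := φ) i a⁻¹ • z) := by
    rw [← mul_smul, ← map_mul, mul_inv_rev]
  ext
  simp only [Subgroup.coe_mul, lamI_coe, hz]
  group

lemma lamI_one (i : ι) (z : Xq f) : lamI f i 1 z = 1 := by
  ext
  simp only [lamI_coe, inv_one, map_one, one_smul, one_mul, mul_one, OneMemClass.coe_one,
    inv_mul_cancel]

/-! ### The generating quiver -/

variable (hfree : ∀ i : ι, IsFreeGroup ((f.comp (Monoid.PushoutI.of (φ := φ) i)).ker))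

/-- Generating arrows for the action groupoid of `PushoutI φ` on `Xq f`. -/
inductive Gen : Xq f → Xq f → Type (max v u)
  | cArr (y : Xq f) (h : y ≠ repC f y) : Gen (repC f y) y
  | loop (i : ι) (x : Xq f) (h : x = bp f i x)
      (k : @IsFreeGroup.Generators ((f.comp (Monoid.PushoutI.of (φ := φ) i)).ker) _ (hfree i)) :
      Gen x x
  | tree (i : ι) (y : Xq f) (h1 : repC f y = y) (h2 : y ≠ bp f i y) : Gen (bp f i y) y

/-- The group element realizing a generating arrow. -/
def genElt : ∀ {x y : Xq f}, Gen f hfree x y → Monoid.PushoutI φ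
  | _, _, .cArr y _ => Monoid.PushoutI.base φ (tC f y)
  | _, _, .loop i _ _ k =>
      Monoid.PushoutI.of (φ := φ) i ((@IsFreeGroup.of _ _ (hfree i) k : _) : H i)
  | _, _, .tree i y _ _ => Monoid.PushoutI.of (φ := φ) i (tI f i y)

lemma genElt_spec : ∀ {x y : Xq f} (e : Gen f hfree x y), genElt f hfree e • x = y
  | _, _, .cArr y _ => tC_spec f y
  | _, _, .loop i x _ k => kerI_smul f _ x
  | _, _, .tree i y _ _ => tI_spec f i y

section Labels

variable {Y : Type max v u} [Group Y]
variable (lab : ∀ x y : Xq f, Gen f hfree x y → Y)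

/-- Value on the `C`-star arrows. -/
def qY (x : Xq f) : Y := if h : x = repC f x then 1 else lab _ _ (Gen.cArr x h)

/-- Value homomorphism on the stabilizer of the `i`-orbit of `x`. -/
def PY (i : ι) (x : Xq f) : ((f.comp (Monoid.PushoutI.of (φ := φ) i)).ker) →* Y :=
  @IsFreeGroup.lift _ _ (hfree i) _ _ (fun k => lab _ _ (Gen.loop i (bp f i x) (bp_idem f i x).symm k))

/-- Value on the `i`-tree arrows. -/
def pY (i : ι) (x : Xq f) : Y :=
  if h : repC f x = bp f i x then 1
  else lab _ _ (Gen.tree i (repC f x) (repC_idem f x) (fun e => h (e.trans (bp_repC f i x))))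

def wY (i : ι) (x : Xq f) : Y := qY f hfree lab x * pY f hfree lab i x

/-- The left part of the semidirect-product cocycle on the `i`-th factor. -/
def LY (i : ι) (a : H i) (b : Xq f) : Y :=
  wY f hfree lab i b * PY f hfree lab i b (lamI f i a b)
    * (wY f hfree lab i (Monoid.PushoutI.of (φ := φ) i a⁻¹ • b))⁻¹

lemma loop_label_irrel (i : ι) {z z' : Xq f} (h : z = z') (p : z = bp f i z)
    (p' : z' = bp f i z')
    (k : @IsFreeGroup.Generators ((f.comp (Monoid.PushoutI.of (φ := φ) i)).ker) _ (hfree i)) :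
    lab _ _ (Gen.loop i z p k) = lab _ _ (Gen.loop i z' p' k) := by cases h; rfl

lemma tree_label_irrel (i : ι) {y y' : Xq f} (h : y = y') (p1 : repC f y = y)
    (p2 : y ≠ bp f i y) (q1 : repC f y' = y') (q2 : y' ≠ bp f i y') :
    lab _ _ (Gen.tree i y p1 p2) = lab _ _ (Gen.tree i y' q1 q2) := by cases h; rfl

lemma qY_repC (x : Xq f) : qY f hfree lab (repC f x) = 1 :=
  dif_pos (repC_idem f x).symm

lemma qY_of_fixed {x : Xq f} (h : repC f x = x) : qY f hfree lab x = 1 :=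
  dif_pos h.symm

lemma PY_eq_of_bp_eq {i : ι} {x x' : Xq f} (h : bp f i x = bp f i x') :
    PY f hfree lab i x = PY f hfree lab i x' := by
  unfold PY
  congr 1
  funext k
  exact loop_label_irrel f hfree lab i h _ _ k

lemma PY_smulI (i : ι) (a : H i) (x : Xq f) :
    PY f hfree lab i (Monoid.PushoutI.of (φ := φ) i a • x) = PY f hfree lab i x :=
  PY_eq_of_bp_eq f hfree lab (bp_smul f i a x)

lemma pY_smulC (i : ι) (c : C) (x : Xq f) :
    pY f hfree lab i (Monoid.PushoutI.base φ c • x) = pY f hfree lab i x := by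
  unfold pY
  have h1 := repC_smul f c x
  have h2 := bp_smulC f i c x
  split
  · next h => rw [dif_pos (by rw [← h1, ← h2]; exact h)]
  · next h =>
    rw [dif_neg (by rw [← h1, ← h2]; exact h)]
    exact tree_label_irrel f hfree lab i h1 _ _ _ _

lemma pY_bp_cond {i : ι} {x : Xq f} (h : repC f x = bp f i x) : pY f hfree lab i x = 1 :=
  dif_pos h

lemma wY_bp (hC : Function.Injective (f.comp (Monoid.PushoutI.base φ))) (i : ι) (x : Xq f) :
    wY f hfree lab i (bp f i x) = 1 := by
  unfold wY
  rw [qY_of_fixed f hfree lab (repC_bp f i x),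
    pY_bp_cond f hfree lab (by rw [repC_bp, bp_idem]), one_mul]

lemma LY_mul (i : ι) (a b : H i) (z : Xq f) :
    LY f hfree lab i (a * b) z
      = LY f hfree lab i a z
        * LY f hfree lab i b (Monoid.PushoutI.of (φ := φ) i a⁻¹ • z) := by
  have hz : Monoid.PushoutI.of (φ := φ) i (a * b)⁻¹ • z
      = Monoid.PushoutI.of (φ := φ) i b⁻¹ • (Monoid.PushoutI.of (φ := φ) i a⁻¹ • z) := by
    rw [← mul_smul, ← map_mul, mul_inv_rev]
  unfold LY
  rw [lamI_mul, map_mul, hz, ← PY_smulI f hfree lab i a⁻¹ z]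
  group

lemma LY_one (i : ι) (z : Xq f) : LY f hfree lab i 1 z = 1 := by
  unfold LY
  rw [lamI_one, map_one, inv_one, map_one, one_smul]
  group

/-- The compatible family of homomorphisms into the wreath-type semidirect product. -/
def FI (i : ι) : H i →* (Xq f → Y) ⋊[mulAutArrow] Monoid.PushoutI φ where
  toFun a := ⟨LY f hfree lab i a, Monoid.PushoutI.of (φ := φ) i a⟩
  map_one' := by
    refine SemidirectProduct.ext ?_ (map_one _)
    funext z
    exact LY_one f hfree lab i z
  map_mul' a b := by
    refine SemidirectProduct.ext ?_ (by simp [map_mul])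
    funext z
    rw [SemidirectProduct.mul_left]
    show LY f hfree lab i (a * b) z
      = LY f hfree lab i a z * (mulAutArrow (Monoid.PushoutI.of (φ := φ) i a) _) z
    rw [mulAutArrow_apply_apply]
    show _ = LY f hfree lab i a z
      * LY f hfree lab i b ((Monoid.PushoutI.of (φ := φ) i a)⁻¹ • z)
    rw [← map_inv]
    exact LY_mul f hfree lab i a b z

/-- The homomorphism on the base group. -/
def FB : C →* (Xq f → Y) ⋊[mulAutArrow] Monoid.PushoutI φ where
  toFun c := ⟨fun b => qY f hfree lab b * (qY f hfree lab (Monoid.PushoutI.base φ c⁻¹ • b))⁻¹,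
    Monoid.PushoutI.base φ c⟩
  map_one' := by
    refine SemidirectProduct.ext ?_ (map_one _)
    funext z
    simp
  map_mul' c c' := by
    refine SemidirectProduct.ext ?_ (by simp [map_mul])
    funext z
    rw [SemidirectProduct.mul_left]
    show _ = _ * (mulAutArrow (A := Xq f) (M := Y) (Monoid.PushoutI.base φ c) _) z
    rw [mulAutArrow_apply_apply]
    show qY f hfree lab z * (qY f hfree lab (Monoid.PushoutI.base φ (c * c')⁻¹ • z))⁻¹
      = (qY f hfree lab z * (qY f hfree lab (Monoid.PushoutI.base φ c⁻¹ • z))⁻¹)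
        * (qY f hfree lab ((Monoid.PushoutI.base φ c)⁻¹ • z)
          * (qY f hfree lab (Monoid.PushoutI.base φ c'⁻¹ • ((Monoid.PushoutI.base φ c)⁻¹ • z)))⁻¹)
    rw [← map_inv, ← mul_smul, ← map_mul]
    have h1 : (c * c')⁻¹ = c'⁻¹ * c⁻¹ := mul_inv_rev c c'
    rw [h1]
    group

lemma compat (hC : Function.Injective (f.comp (Monoid.PushoutI.base φ))) (i : ι) :
    (FI f hfree lab i).comp (φ i) = FB f hfree lab := by
  refine MonoidHom.ext fun c => ?_
  refine SemidirectProduct.ext ?_ ?_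
  swap
  · show Monoid.PushoutI.of (φ := φ) i (φ i c) = Monoid.PushoutI.base φ c
    exact Monoid.PushoutI.of_apply_eq_base φ i c
  funext b
  show LY f hfree lab i (φ i c) b = _
  have hx : Monoid.PushoutI.of (φ := φ) i (φ i c)⁻¹ • b = Monoid.PushoutI.base φ c⁻¹ • b := by
    rw [← map_inv (φ i), Monoid.PushoutI.of_apply_eq_base φ]
  have hlam : lamI f i (φ i c) b = 1 := by
    ext
    rw [lamI_coe, hx, tI_smulC f hC, map_inv]
    show _ = ((1 : (f.comp (Monoid.PushoutI.of (φ := φ) i)).ker) : H i)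
    rw [OneMemClass.coe_one]
    group
  unfold LY
  rw [hlam, map_one, hx]
  show _ = qY f hfree lab b * (qY f hfree lab (Monoid.PushoutI.base φ c⁻¹ • b))⁻¹
  unfold wY
  rw [pY_smulC]
  group

variable (hC : Function.Injective (f.comp (Monoid.PushoutI.base φ)))

/-- The full homomorphism out of the pushout. -/
def Fhom : Monoid.PushoutI φ →* (Xq f → Y) ⋊[mulAutArrow] Monoid.PushoutI φ :=
  Monoid.PushoutI.lift (fun i => FI f hfree lab i) (FB f hfree lab) (compat f hfree lab hC)

lemma Fhom_of (i : ι) (a : H i) :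
    (Fhom f hfree lab hC) (Monoid.PushoutI.of (φ := φ) i a) = FI f hfree lab i a :=
  Monoid.PushoutI.lift_of _ _ _ a

lemma Fhom_base (c : C) :
    (Fhom f hfree lab hC) (Monoid.PushoutI.base φ c) = FB f hfree lab c :=
  Monoid.PushoutI.lift_base _ _ _ c

lemma Fhom_sane : ∀ g, ((Fhom f hfree lab hC) g).right = g := by
  have : SemidirectProduct.rightHom.comp (Fhom f hfree lab hC)
      = MonoidHom.id (Monoid.PushoutI φ) := by
    refine Monoid.PushoutI.hom_ext (fun i => ?_) ?_
    · ext a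
      show ((Fhom f hfree lab hC) (Monoid.PushoutI.of (φ := φ) i a)).right = _
      rw [Fhom_of]
      rfl
    · ext c
      show ((Fhom f hfree lab hC) (Monoid.PushoutI.base φ c)).right = _
      rw [Fhom_base]
      rfl
  intro g
  exact DFunLike.congr_fun this g

lemma value_cArr (y : Xq f) (h : y ≠ repC f y) :
    ((Fhom f hfree lab hC) (Monoid.PushoutI.base φ (tC f y))).left y
      = lab _ _ (Gen.cArr y h) := by
  rw [Fhom_base]
  show qY f hfree lab y * (qY f hfree lab (Monoid.PushoutI.base φ (tC f y)⁻¹ • y))⁻¹ = _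
  have hr : Monoid.PushoutI.base φ (tC f y)⁻¹ • y = repC f y := by
    rw [map_inv, inv_smul_eq_iff, tC_spec]
  rw [hr, qY_repC, inv_one, mul_one]
  exact dif_neg h

lemma value_loop (i : ι) (x : Xq f) (h : x = bp f i x)
    (k : @IsFreeGroup.Generators ((f.comp (Monoid.PushoutI.of (φ := φ) i)).ker) _ (hfree i)) :
    ((Fhom f hfree lab hC) (Monoid.PushoutI.of (φ := φ) i
        ((@IsFreeGroup.of _ _ (hfree i) k : _) : H i))).left x
      = lab _ _ (Gen.loop i x h k) := by
  rw [Fhom_of]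
  show LY f hfree lab i _ x = _
  set k₀ : ((f.comp (Monoid.PushoutI.of (φ := φ) i)).ker) := @IsFreeGroup.of _ _ (hfree i) k
  have h1 : Monoid.PushoutI.of (φ := φ) i ((k₀ : H i))⁻¹ • x = x := by
    rw [show ((k₀ : H i))⁻¹ = ((k₀⁻¹ : _) : H i) from rfl]
    exact kerI_smul f _ x
  have htI : tI f i x = 1 := by rw [h]; exact tI_bp f hC i x
  have hlam : lamI f i (k₀ : H i) x = k₀ := by
    ext
    rw [lamI_coe, h1, htI]
    group
  have hw : wY f hfree lab i x = 1 := by rw [h]; exact wY_bp f hfree lab hC i x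
  unfold LY
  rw [hlam, h1, hw]
  have : PY f hfree lab i x k₀ = lab _ _ (Gen.loop i (bp f i x) (bp_idem f i x).symm k) :=
    @IsFreeGroup.lift_of _ _ (hfree i) _ _ _ k
  rw [this, loop_label_irrel f hfree lab i h.symm _ h k]
  group

lemma value_tree (i : ι) (y : Xq f) (h1 : repC f y = y) (h2 : y ≠ bp f i y) :
    ((Fhom f hfree lab hC) (Monoid.PushoutI.of (φ := φ) i (tI f i y))).left y
      = lab _ _ (Gen.tree i y h1 h2) := by
  rw [Fhom_of]
  show LY f hfree lab i _ y = _
  have hx : Monoid.PushoutI.of (φ := φ) i (tI f i y)⁻¹ • y = bp f i y := by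
    rw [map_inv]
    exact tI_inv_smul f i y
  have hlam : lamI f i (tI f i y) y = 1 := by
    ext
    rw [lamI_coe, hx, tI_bp f hC]
    show _ = ((1 : (f.comp (Monoid.PushoutI.of (φ := φ) i)).ker) : H i)
    rw [OneMemClass.coe_one]
    group
  unfold LY
  rw [hlam, map_one, hx, wY_bp f hfree lab hC]
  unfold wY
  rw [qY_of_fixed f hfree lab h1]
  have hcond : ¬ (repC f y = bp f i y) := fun e => h2 (by rw [h1] at e; exact e)
  have hp : pY f hfree lab i y = lab _ _ (Gen.tree i y h1 h2) := by
    unfold pY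
    rw [dif_neg hcond]
    exact tree_label_irrel f hfree lab i h1 _ _ _ _
  rw [hp]
  group

lemma value_all (x y : Xq f) (e : Gen f hfree x y) :
    ((Fhom f hfree lab hC) (genElt f hfree e)).left y = lab x y e := by
  cases e with
  | cArr z h => exact value_cArr f hfree lab hC _ h
  | loop i z h k => exact value_loop f hfree lab hC i _ h k
  | tree i z h1 h2 => exact value_tree f hfree lab hC i _ h1 h2

section Unique

/-- A generating arrow as a morphism of the action groupoid. -/
def genHom {a b : ActionCategory (Monoid.PushoutI φ) (Xq f)}
    (e : Gen f hfree a.back b.back) : a ⟶ b :=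
  ⟨genElt f hfree e, genElt_spec f hfree e⟩

variable (E : ActionCategory (Monoid.PushoutI φ) (Xq f) ⥤ SingleObj Y)

/-- The underlying cocycle of a functor to `SingleObj Y`. -/
def mE : Monoid.PushoutI φ → Xq f → Y := fun g b => ((ActionCategory.curry E) g).left b

lemma mE_mul (g h : Monoid.PushoutI φ) (b : Xq f) :
    mE f E (g * h) b = mE f E g b * mE f E h (g⁻¹ • b) := by
  unfold mE
  rw [map_mul, SemidirectProduct.mul_left, Pi.mul_apply]
  congr 2

lemma mE_one (b : Xq f) : mE f E 1 b = 1 := by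
  unfold mE
  rw [map_one, SemidirectProduct.one_left]
  rfl

lemma mE_inv (g : Monoid.PushoutI φ) (y : Xq f) :
    mE f E g⁻¹ y = (mE f E g (g • y))⁻¹ := by
  have h := mE_mul f E g g⁻¹ (g • y)
  rw [mul_inv_cancel, mE_one, inv_smul_smul] at h
  rw [eq_comm, inv_eq_iff_mul_eq_one, ← h]

lemma map_eq_mE : ∀ ⦃p q : ActionCategory (Monoid.PushoutI φ) (Xq f)⦄ (fm : p ⟶ q),
    E.map fm = mE f E fm.val q.back := by
  refine ActionCategory.cases ?_
  intro t g
  show E.map _ = ((ActionCategory.curry E) _).left _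
  rw [ActionCategory.curry_apply_left]
  rfl

variable (hE : ∀ (x y : Xq f) (e : Gen f hfree x y),
    E.map (genHom f hfree (a := (x : ActionCategory (Monoid.PushoutI φ) (Xq f))) (b := y) e)
      = lab x y e)

include hE

lemma mE_gen (x y : Xq f) (e : Gen f hfree x y) :
    mE f E (genElt f hfree e) y = lab x y e := by
  rw [← hE x y e]
  exact (map_eq_mE f E (genHom f hfree (a := (x : ActionCategory (Monoid.PushoutI φ) (Xq f))) (b := y) e)).symm

lemma mE_tC (hC : Function.Injective (f.comp (Monoid.PushoutI.base φ))) (x : Xq f) :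
    mE f E (Monoid.PushoutI.base φ (tC f x)) x = qY f hfree lab x := by
  by_cases h : x = repC f x
  · rw [tC_of_fixed f hC h.symm, map_one, mE_one, qY_of_fixed f hfree lab h.symm]
  · rw [qY, dif_neg h, ← mE_gen f hfree lab E hE _ _ (Gen.cArr x h)]
    rfl

lemma mE_base (hC : Function.Injective (f.comp (Monoid.PushoutI.base φ))) (c : C) (b : Xq f) :
    mE f E (Monoid.PushoutI.base φ c) b
      = qY f hfree lab b * (qY f hfree lab (Monoid.PushoutI.base φ c⁻¹ • b))⁻¹ := by
  set x := Monoid.PushoutI.base φ c⁻¹ • b with hxdef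
  have hb : Monoid.PushoutI.base φ c • x = b := by
    rw [hxdef, map_inv, smul_inv_smul]
  have hc : c = tC f b * (tC f x)⁻¹ := by
    have h1 : tC f (Monoid.PushoutI.base φ c • x) = c * tC f x := tC_smul f hC c x
    rw [hb] at h1
    rw [h1]
    group
  have hrepC : repC f b = repC f x := by rw [← hb, repC_smul]
  rw [hc, map_mul, mE_mul]
  have h2 : (Monoid.PushoutI.base φ (tC f b))⁻¹ • b = repC f b := by
    rw [inv_smul_eq_iff, tC_spec]
  rw [h2, mE_tC f hfree lab E hE hC, map_inv, mE_inv]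
  have h3 : Monoid.PushoutI.base φ (tC f x) • repC f b = x := by
    rw [hrepC, tC_spec]
  rw [h3, mE_tC f hfree lab E hE hC]

/-- The stabilizer homomorphism extracted from the functor. -/
def mEK (i : ι) (x : Xq f) : ((f.comp (Monoid.PushoutI.of (φ := φ) i)).ker) →* Y where
  toFun k := mE f E (Monoid.PushoutI.of (φ := φ) i (k : H i)) (bp f i x)
  map_one' := by
    simp only [OneMemClass.coe_one, map_one]
    exact mE_one f E _
  map_mul' k k' := by
    show mE f E (Monoid.PushoutI.of (φ := φ) i ((↑(k * k') : H i))) (bp f i x)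
      = mE f E (Monoid.PushoutI.of (φ := φ) i ((k : H i))) (bp f i x)
        * mE f E (Monoid.PushoutI.of (φ := φ) i ((k' : H i))) (bp f i x)
    rw [Subgroup.coe_mul, map_mul, mE_mul]
    have hfix : (Monoid.PushoutI.of (φ := φ) i ((k : H i)))⁻¹ • bp f i x = bp f i x := by
      rw [← map_inv, show ((k : H i))⁻¹ = (((k⁻¹ : _) : _) : H i) from rfl]
      exact kerI_smul f _ _
    rw [hfix]

lemma mE_K (hC : Function.Injective (f.comp (Monoid.PushoutI.base φ))) (i : ι) (x : Xq f)
    (k : ((f.comp (Monoid.PushoutI.of (φ := φ) i)).ker)) :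
    mE f E (Monoid.PushoutI.of (φ := φ) i (k : H i)) (bp f i x)
      = PY f hfree lab i x k := by
  have heq : mEK f E i x = PY f hfree lab i x := by
    refine @IsFreeGroup.ext_hom _ _ (hfree i) _ _ _ _ fun k₀ => ?_
    show mE f E _ (bp f i x) = _
    have h1 : PY f hfree lab i x (@IsFreeGroup.of _ _ (hfree i) k₀)
        = lab _ _ (Gen.loop i (bp f i x) (bp_idem f i x).symm k₀) :=
      @IsFreeGroup.lift_of _ _ (hfree i) _ _ _ k₀
    rw [h1, ← mE_gen f hfree lab E hE _ _ (Gen.loop i (bp f i x) (bp_idem f i x).symm k₀)]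
    rfl
  have := DFunLike.congr_fun heq k
  exact this

lemma mE_tI (hC : Function.Injective (f.comp (Monoid.PushoutI.base φ))) (i : ι) (x : Xq f) :
    mE f E (Monoid.PushoutI.of (φ := φ) i (tI f i x)) x = wY f hfree lab i x := by
  unfold tI
  rw [map_mul, Monoid.PushoutI.of_apply_eq_base φ, mE_mul]
  have h2 : (Monoid.PushoutI.base φ (tC f x))⁻¹ • x = repC f x := by
    rw [inv_smul_eq_iff, tC_spec]
  rw [h2, mE_tC f hfree lab E hE hC]
  unfold wY
  congr 1
  by_cases h : repC f x = bp f i x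
  · have ht : t' f i (repC f x) = 1 := t'_bp f (h.trans (bp_repC f i x).symm)
    rw [ht, map_one, mE_one, pY_bp_cond f hfree lab h]
  · have hcond : repC f x ≠ bp f i (repC f x) := fun e => h (e.trans (bp_repC f i x))
    have ht : t' f i (repC f x) = tI f i (repC f x) :=
      (tI_of_repC_fixed f hC (repC_idem f x)).symm
    have hval := mE_gen f hfree lab E hE _ _ (Gen.tree i (repC f x) (repC_idem f x) hcond)
    have hpY : pY f hfree lab i x
        = lab _ _ (Gen.tree i (repC f x) (repC_idem f x) hcond) := by
      unfold pY
      exact dif_neg h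
    rw [ht, hpY, ← hval]
    rfl

lemma mE_I (hC : Function.Injective (f.comp (Monoid.PushoutI.base φ))) (i : ι) (a : H i)
    (b : Xq f) : mE f E (Monoid.PushoutI.of (φ := φ) i a) b = LY f hfree lab i a b := by
  set x := Monoid.PushoutI.of (φ := φ) i a⁻¹ • b with hxdef
  have hdec : a = tI f i b * ((lamI f i a b : H i) * (tI f i x)⁻¹) := by
    rw [lamI_coe, ← hxdef]
    group
  have hbp : bp f i x = bp f i b := by rw [hxdef, bp_smul]
  conv_lhs => rw [hdec]
  rw [map_mul, mE_mul]
  have h1 : (Monoid.PushoutI.of (φ := φ) i (tI f i b))⁻¹ • b = bp f i b := by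
    rw [← map_inv]
    exact tI_inv_smul f i b
  rw [h1, mE_tI f hfree lab E hE hC, map_mul, mE_mul]
  have h2 : (Monoid.PushoutI.of (φ := φ) i ((lamI f i a b : H i)))⁻¹ • bp f i b = bp f i b := by
    rw [← map_inv]
    rw [show ((lamI f i a b : H i))⁻¹ = (((lamI f i a b)⁻¹ : _) : H i) from rfl]
    exact kerI_smul f _ _
  rw [h2, mE_K f hfree lab E hE hC i b (lamI f i a b), map_inv, mE_inv]
  have h3 : Monoid.PushoutI.of (φ := φ) i (tI f i x) • bp f i b = x := by
    rw [← hbp, tI_spec]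
  rw [h3, mE_tI f hfree lab E hE hC]
  unfold LY
  rw [← hxdef, mul_assoc]

lemma curryE_eq (hC : Function.Injective (f.comp (Monoid.PushoutI.base φ))) :
    ActionCategory.curry E = Fhom f hfree lab hC := by
  refine Monoid.PushoutI.hom_ext (fun i => ?_) ?_
  · refine MonoidHom.ext fun a => ?_
    refine SemidirectProduct.ext ?_ ?_
    · funext b
      show mE f E (Monoid.PushoutI.of (φ := φ) i a) b
        = ((Fhom f hfree lab hC) (Monoid.PushoutI.of (φ := φ) i a)).left b
      rw [mE_I f hfree lab E hE hC, Fhom_of]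
      rfl
    · show ((ActionCategory.curry E) (Monoid.PushoutI.of (φ := φ) i a)).right
        = ((Fhom f hfree lab hC) (Monoid.PushoutI.of (φ := φ) i a)).right
      rw [ActionCategory.curry_apply_right, Fhom_of]
      rfl
  · refine MonoidHom.ext fun c => ?_
    refine SemidirectProduct.ext ?_ ?_
    · funext b
      show mE f E (Monoid.PushoutI.base φ c) b
        = ((Fhom f hfree lab hC) (Monoid.PushoutI.base φ c)).left b
      rw [mE_base f hfree lab E hE hC, Fhom_base]
      rfl
    · show ((ActionCategory.curry E) (Monoid.PushoutI.base φ c)).right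
        = ((Fhom f hfree lab hC) (Monoid.PushoutI.base φ c)).right
      rw [ActionCategory.curry_apply_right, Fhom_base]
      rfl

end Unique

end Labels

/-- The action groupoid of the pushout on the cosets of the kernel is a free groupoid. -/
def isFreeGroupoid (hC : Function.Injective (f.comp (Monoid.PushoutI.base φ)))
    (hfree : ∀ i : ι, IsFreeGroup ((f.comp (Monoid.PushoutI.of (φ := φ) i)).ker)) :
    IsFreeGroupoid (ActionCategory (Monoid.PushoutI φ) (Xq f)) where
  quiverGenerators := ⟨fun p q => Gen f hfree p.back q.back⟩
  of := fun e => genHom f hfree e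
  unique_lift := by
    intro Y _ lab'
    let lab : ∀ x y : Xq f, Gen f hfree x y → Y := fun x y e => @lab' ⟨⟨⟩, x⟩ ⟨⟨⟩, y⟩ e
    refine ⟨ActionCategory.uncurry (Fhom f hfree lab hC) (Fhom_sane f hfree lab hC), ?_, ?_⟩
    · rintro ⟨⟨⟩, x⟩ ⟨⟨⟩, y⟩ e
      show ((Fhom f hfree lab hC) (genElt f hfree e)).left y = lab x y e
      exact value_all f hfree lab hC x y e
    · intro E hE
      have hE' : ∀ (x y : Xq f) (e : Gen f hfree x y),
          E.map (genHom f hfree (a := (⟨⟨⟩, x⟩ : ActionCategory (Monoid.PushoutI φ) (Xq f)))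
            (b := ⟨⟨⟩, y⟩) e) = lab x y e :=
        fun x y e => hE ⟨⟨⟩, x⟩ ⟨⟨⟩, y⟩ e
      have hcur := curryE_eq f hfree lab E hE' hC
      apply CategoryTheory.Functor.hext
      · intro p
        apply Unit.ext
      · refine ActionCategory.cases ?_
        intro t g
        refine heq_of_eq ?_
        rw [map_eq_mE f E (ActionCategory.homOfPair t g)]
        show ((ActionCategory.curry E) g).left t = _
        rw [hcur]
        rfl

end AmalgFree

end AmalgFreeSection


/-- Let `C` be a subgroup of `A` and of `B` (via injections `ι₁`, `ι₂`),
let `G = A ∗_C B`, and let `f : G → Q` be a homomorphism whose restriction to `C`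
is injective. If the kernels of the restrictions of `f` to `A` and to `B` are free
groups, then the kernel of `f` is a free group. -/
theorem ker_isFreeGroup_of_amalgamated (A B C Q : Type u)
    [Group A] [Group B] [Group C] [Group Q]
    (ι₁ : C →* A) (ι₂ : C →* B)
    (h₁ : Function.Injective ι₁) (h₂ : Function.Injective ι₂)
    (f : Monoid.PushoutI (famHom ι₁ ι₂) →* Q)
    (hC : Function.Injective (f.comp (Monoid.PushoutI.base (famHom ι₁ ι₂))))
    (hA : IsFreeGroup (f.comp (Monoid.PushoutI.of (φ := famHom ι₁ ι₂) true)).ker)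
    (hB : IsFreeGroup (f.comp (Monoid.PushoutI.of (φ := famHom ι₁ ι₂) false)).ker) :
    IsFreeGroup f.ker := by
  have hfree : ∀ i : Bool,
      IsFreeGroup ((f.comp (Monoid.PushoutI.of (φ := famHom ι₁ ι₂) i)).ker) := by
    intro i
    cases i
    · exact hB
    · exact hA
  letI := AmalgFree.isFreeGroupoid f hC hfree
  haveI : CategoryTheory.IsConnected
      (CategoryTheory.ActionCategory (Monoid.PushoutI (famHom ι₁ ι₂)) (AmalgFree.Xq f)) :=
    inferInstance
  have hF := @IsFreeGroupoid.endIsFreeOfConnectedFree _ _ (by assumption) (by assumption)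
    (CategoryTheory.ActionCategory.objEquiv (Monoid.PushoutI (famHom ι₁ ι₂))
      (Monoid.PushoutI (famHom ι₁ ι₂) ⧸ f.ker) ↑(1 : Monoid.PushoutI (famHom ι₁ ι₂)))
  exact @IsFreeGroup.ofMulEquiv _ _ hF _ _
    { toEquiv := (CategoryTheory.ActionCategory.endMulEquivSubgroup f.ker).toEquiv,
      map_mul' := fun x y => (CategoryTheory.ActionCategory.endMulEquivSubgroup f.ker).map_mul' x y }
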